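/- Let c ≥ 1 be an integer, k an odd positive integer, ζ a primitive 2c-th root of unity, z ≥ 0 an integer, and P ∈ ℤ[ζ][x]. If n ≥ (deg(P)+1)·kc, then Φ_{kc}(q) divides ∑_{m=0}^{n} ζ^m P(m) q^{zm} binom(n,m)_q in ℤ[ζ][q]. -/
import Mathlib


open Polynomial Finset

/-- The Gaussian (q-)binomial coefficient as a polynomial, satisfying the
product formula `∏_{i=n-m+1}^{n}(1-q^i) / ∏_{i=1}^{m}(1-q^i)`. -/
noncomputable def qbinom (R : Type*) [CommRing R] : ℕ → ℕ → Polynomial R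
  | _, 0 => 1
  | 0, _+1 => 0
  | n+1, m+1 => qbinom R n (m+1) + X ^ (n - m) * qbinom R n m

/-- The subring ℤ[ζ] of ℂ. -/
noncomputable abbrev Zadj (ζ : ℂ) : Type := Algebra.adjoin ℤ ({ζ} : Set ℂ)

/-- ζ as an element of ℤ[ζ]. -/
noncomputable def zeta (ζ : ℂ) : Zadj ζ := ⟨ζ, Algebra.self_mem_adjoin_singleton ℤ ζ⟩

section QBLemmas
variable {R : Type*} [CommRing R] {S : Type*} [CommRing S]

@[simp] lemma qbinom_zero_right (n : ℕ) : qbinom R n 0 = 1 := by cases n <;> rfl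

@[simp] lemma qbinom_zero_succ (m : ℕ) : qbinom R 0 (m+1) = 0 := rfl

lemma qbinom_succ_succ (n m : ℕ) :
    qbinom R (n+1) (m+1) = qbinom R n (m+1) + X ^ (n - m) * qbinom R n m := rfl

lemma qbinom_eq_zero_of_lt : ∀ {n m : ℕ}, n < m → qbinom R n m = 0 := by
  intro n
  induction n with
  | zero => intro m hm; obtain ⟨m, rfl⟩ := Nat.exists_eq_add_of_lt hm; rfl
  | succ n ih =>
    intro m hm
    obtain ⟨m, rfl⟩ : ∃ m', m = m' + 1 := ⟨m - 1, by omega⟩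
    rw [qbinom_succ_succ, ih (by omega), ih (by omega), mul_zero, add_zero]
@[simp] lemma qbinom_self (n : ℕ) : qbinom R n n = 1 := by
  induction n with
  | zero => rfl
  | succ n ih => rw [qbinom_succ_succ, qbinom_eq_zero_of_lt (by omega), ih, zero_add,
      Nat.sub_self, pow_zero, mul_one]


lemma qbinom_succ (n m : ℕ) (hm : 0 < m) :
    qbinom R (n+1) m = qbinom R n m + X ^ (n + 1 - m) * qbinom R n (m-1) := by
  obtain ⟨m', rfl⟩ : ∃ m', m = m' + 1 := ⟨m - 1, by omega⟩
  rw [qbinom_succ_succ, show n + 1 - (m'+1) = n - m' from by omega,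
    show m' + 1 - 1 = m' from by omega]

lemma qbinom_map (f : R →+* S) : ∀ n m : ℕ, (qbinom R n m).map f = qbinom S n m := by
  intro n
  induction n with
  | zero => intro m; cases m <;> simp
  | succ n ih =>
    intro m
    cases m with
    | zero => simp
    | succ m => simp [qbinom_succ_succ, Polynomial.map_add, Polynomial.map_mul,
        Polynomial.map_pow, ih]

lemma qbinom_mul_prod (R : Type*) [CommRing R] :
    ∀ n m : ℕ, m ≤ n →
      qbinom R n m * ∏ i ∈ range m, (1 - X ^ (i+1)) =
        ∏ i ∈ Finset.Ico (n - m) n, (1 - (X : Polynomial R) ^ (i+1)) := by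
  intro n
  induction n with
  | zero => intro m hm; interval_cases m; simp
  | succ n ih =>
    intro m hm
    cases m with
    | zero => simp
    | succ m =>
      rcases Nat.lt_or_ge m n with hmn | hmn
      · -- m + 1 ≤ n
        have h1 := ih (m+1) hmn
        have h2 := ih m (le_of_lt hmn)
        have hA : (∏ i ∈ Finset.Ico (n - (m+1)) n, (1 - (X:Polynomial R) ^ (i+1))) =
            (1 - X ^ (n - m)) * ∏ i ∈ Finset.Ico (n - m) n, (1 - X ^ (i+1)) := by
          rw [Finset.prod_eq_prod_Ico_succ_bot (by omega : n - (m+1) < n)]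
          have : n - (m+1) + 1 = n - m := by omega
          rw [this]
        have hB : (∏ i ∈ Finset.Ico (n + 1 - (m+1)) (n+1), (1 - (X:Polynomial R) ^ (i+1))) =
            (∏ i ∈ Finset.Ico (n - m) n, (1 - (X:Polynomial R) ^ (i+1))) * (1 - X ^ (n+1)) := by
          have : n + 1 - (m+1) = n - m := by omega
          rw [this, Finset.prod_Ico_succ_top (by omega : n - m ≤ n)]
        have hp : (X:Polynomial R)^(n-m) * X^(m+1) = X^(n+1) := by
          rw [← pow_add]; congr 1; omega
        rw [qbinom_succ_succ, add_mul, h1, Finset.prod_range_succ, hA, hB]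
        have h2' : X ^ (n - m) * qbinom R n m *
            ((∏ i ∈ range m, (1 - X ^ (i+1))) * (1 - X ^ (m+1))) =
            X ^ (n - m) * (∏ i ∈ Finset.Ico (n - m) n, (1 - (X:Polynomial R) ^ (i+1))) *
              (1 - X ^ (m+1)) := by
          rw [← h2]; ring
        rw [h2']
        linear_combination (-(∏ i ∈ Finset.Ico (n-m) n, (1 - (X:Polynomial R)^(i+1)))) * hp
      · -- m = n
        have hm' : m = n := by omega
        subst hm'
        rw [qbinom_succ_succ, qbinom_eq_zero_of_lt (by omega), qbinom_self, zero_add,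
          Nat.sub_self, pow_zero, one_mul, one_mul, Nat.sub_self]
        rw [← Finset.range_eq_Ico]

variable {d : ℕ} {Φ : Polynomial R}

lemma hXe (hX : Φ ∣ X ^ d - 1) (a : ℕ) : Φ ∣ (X : Polynomial R) ^ (a + d) - X ^ a := by
  have : (X : Polynomial R) ^ (a + d) - X ^ a = X ^ a * (X ^ d - 1) := by
    rw [pow_add]; ring
  rw [this]
  exact hX.mul_left _

lemma hXe' (hX : Φ ∣ X ^ d - 1) {a b : ℕ} (hab : a = b + d) :
    Φ ∣ (X : Polynomial R) ^ a - X ^ b := hab ▸ hXe hX b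

lemma periodic_pascal (hd : 0 < d) (hX : Φ ∣ X ^ d - 1)
    (hq : ∀ m, 0 < m → m < d → Φ ∣ qbinom R d m) :
    ∀ n : ℕ,
      (∀ m, m < d → Φ ∣ qbinom R (n+d) m - qbinom R n m) ∧
      (∀ j, Φ ∣ qbinom R (n+d) (j+d) - qbinom R n (j+d) - qbinom R n j) := by
  intro n
  induction n with
  | zero =>
    constructor
    · intro m hm
      rcases Nat.eq_zero_or_pos m with rfl | hm0
      · simp [qbinom_zero_right]
      · rw [qbinom_eq_zero_of_lt (by omega : 0 < m), sub_zero, zero_add]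
        exact hq m hm0 hm
    · intro j
      rcases Nat.eq_zero_or_pos j with rfl | hj0
      · rw [zero_add, qbinom_self, qbinom_zero_right,
          qbinom_eq_zero_of_lt (by omega : 0 < d)]
        simp
      · rw [zero_add, qbinom_eq_zero_of_lt (by omega : d < j + d),
          qbinom_eq_zero_of_lt (by omega : 0 < j + d),
          qbinom_eq_zero_of_lt (by omega : 0 < j)]
        simp
  | succ n ih =>
    obtain ⟨ih1, ih2⟩ := ih
    constructor
    · intro m hm
      rcases Nat.eq_zero_or_pos m with rfl | hm0
      · simp [qbinom_zero_right]
      · have hr1 : qbinom R (n+1+d) m = qbinom R (n+d) m + X ^ (n+d+1-m) * qbinom R (n+d) (m-1) := by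
          rw [show n+1+d = (n+d)+1 from by omega, qbinom_succ _ _ hm0]
        have hr2 := qbinom_succ (R := R) n m hm0
        rw [hr1, hr2]
        have h1 := ih1 m hm
        have hlast : Φ ∣ X ^ (n+d+1-m) * qbinom R (n+d) (m-1) - X ^ (n+1-m) * qbinom R n (m-1) := by
          have h2 := ih1 (m-1) (by omega)
          rcases le_or_gt m (n+1) with hle | hlt
          · have he : Φ ∣ (X : Polynomial R) ^ (n+d+1-m) - X ^ (n+1-m) :=
              hXe' hX (by omega)
            have : X ^ (n+d+1-m) * qbinom R (n+d) (m-1) - X ^ (n+1-m) * qbinom R n (m-1) =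
                X ^ (n+d+1-m) * (qbinom R (n+d) (m-1) - qbinom R n (m-1)) +
                  ((X:Polynomial R) ^ (n+d+1-m) - X ^ (n+1-m)) * qbinom R n (m-1) := by ring
            rw [this]
            exact dvd_add (h2.mul_left _) (he.mul_right _)
          · have h2' : Φ ∣ qbinom R (n+d) (m-1) := by
              rwa [qbinom_eq_zero_of_lt (by omega : n < m - 1), sub_zero] at h2
            rw [qbinom_eq_zero_of_lt (by omega : n < m - 1), mul_zero, sub_zero]
            exact h2'.mul_left _
        have : qbinom R (n+d) m + X ^ (n+d+1-m) * qbinom R (n+d) (m-1) -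
            (qbinom R n m + X ^ (n+1-m) * qbinom R n (m-1)) =
            (qbinom R (n+d) m - qbinom R n m) +
              (X ^ (n+d+1-m) * qbinom R (n+d) (m-1) - X ^ (n+1-m) * qbinom R n (m-1)) := by ring
        rw [this]
        exact dvd_add h1 hlast
    · intro j
      have hjd : 0 < j + d := by omega
      have hr1 : qbinom R (n+1+d) (j+d) =
          qbinom R (n+d) (j+d) + X ^ (n+1-j) * qbinom R (n+d) (j+d-1) := by
        rw [show n+1+d = (n+d)+1 from by omega, qbinom_succ _ _ hjd,
          show n+d+1-(j+d) = n+1-j from by omega]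
      have hr2 : qbinom R (n+1) (j+d) =
          qbinom R n (j+d) + X ^ (n+1-(j+d)) * qbinom R n (j+d-1) := qbinom_succ n (j+d) hjd
      rcases Nat.eq_zero_or_pos j with rfl | hj0
      · -- j = 0
        rw [hr1, hr2]
        rw [show (0:ℕ)+d = d from zero_add d] at *
        have h1 := ih2 0
        rw [zero_add, qbinom_zero_right] at h1
        have hlast : Φ ∣ X ^ (n+1-0) * qbinom R (n+d) (d-1) -
            X ^ (n+1-d) * qbinom R n (d-1) := by
          have h2 := ih1 (d-1) (by omega)
          rcases le_or_gt d (n+1) with hle | hlt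
          · have he : Φ ∣ (X : Polynomial R) ^ (n+1-0) - X ^ (n+1-d) := hXe' hX (by omega)
            have : X ^ (n+1-0) * qbinom R (n+d) (d-1) - X ^ (n+1-d) * qbinom R n (d-1) =
                X ^ (n+1-0) * (qbinom R (n+d) (d-1) - qbinom R n (d-1)) +
                  ((X:Polynomial R) ^ (n+1-0) - X ^ (n+1-d)) * qbinom R n (d-1) := by ring
            rw [this]
            exact dvd_add (h2.mul_left _) (he.mul_right _)
          · have h2' : Φ ∣ qbinom R (n+d) (d-1) := by
              rwa [qbinom_eq_zero_of_lt (by omega : n < d - 1), sub_zero] at h2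
            rw [qbinom_eq_zero_of_lt (by omega : n < d - 1), mul_zero, sub_zero]
            exact h2'.mul_left _
        have hT : qbinom R (n+d) d + X ^ (n+1-0) * qbinom R (n+d) (d-1) -
            (qbinom R n d + X ^ (n+1-d) * qbinom R n (d-1)) - qbinom R (n+1) 0 =
            (qbinom R (n+d) d - qbinom R n d - 1) +
              (X ^ (n+1-0) * qbinom R (n+d) (d-1) - X ^ (n+1-d) * qbinom R n (d-1)) := by
          rw [qbinom_zero_right]; ring
        rw [hT]
        exact dvd_add h1 hlast
      · -- j = j' + 1
        obtain ⟨j', rfl⟩ : ∃ j', j = j' + 1 := ⟨j - 1, by omega⟩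
        have hr3 : qbinom R (n+1) (j'+1) =
            qbinom R n (j'+1) + X ^ (n+1-(j'+1)) * qbinom R n j' := by
          rw [qbinom_succ n (j'+1) (by omega), show j'+1-1 = j' from by omega]
        rw [hr1, hr2, hr3]
        have he1 : n + 1 - (j'+1) = n - j' := by omega
        have he2 : j' + 1 + d - 1 = j' + d := by omega
        rw [he1, he2]
        have h1 := ih2 (j'+1)
        have h2 := ih2 j'
        have hB' : Φ ∣ ((X:Polynomial R) ^ (n-j') - X ^ (n+1-(j'+1+d))) * qbinom R n (j'+d) := by
          rcases le_or_gt (j'+d) n with hle | hlt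
          · exact ((hXe' hX (by omega)).mul_right _)
          · rw [qbinom_eq_zero_of_lt hlt, mul_zero]
            exact dvd_zero _
        have hT : qbinom R (n+d) (j'+1+d) + X ^ (n-j') * qbinom R (n+d) (j'+d) -
            (qbinom R n (j'+1+d) + X ^ (n+1-(j'+1+d)) * qbinom R n (j'+d)) -
            (qbinom R n (j'+1) + X ^ (n-j') * qbinom R n j') =
            (qbinom R (n+d) (j'+1+d) - qbinom R n (j'+1+d) - qbinom R n (j'+1)) +
              X ^ (n-j') * (qbinom R (n+d) (j'+d) - qbinom R n (j'+d) - qbinom R n j') +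
              ((X:Polynomial R) ^ (n-j') - X ^ (n+1-(j'+1+d))) * qbinom R n (j'+d) := by ring
        rw [hT]
        exact dvd_add (dvd_add h1 (h2.mul_left _)) hB'

lemma natDegree_sub_comp_le [IsDomain R] (P : Polynomial R) (a : R) (D : ℕ)
    (h : P.natDegree ≤ D + 1) : (P - P.comp (X + C a)).natDegree ≤ D := by
  have hdeg : (P.comp (X + C a)).natDegree = P.natDegree := by
    rw [natDegree_comp, natDegree_X_add_C, mul_one]
  rw [natDegree_le_iff_coeff_eq_zero]
  intro j hj
  rw [coeff_sub]
  rcases lt_or_eq_of_le (show P.natDegree ≤ j by omega) with hlt | heq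
  · rw [coeff_eq_zero_of_natDegree_lt hlt,
      coeff_eq_zero_of_natDegree_lt (by rw [hdeg]; exact hlt), sub_zero]
  · have h1 : (P.comp (X + C a)).coeff j = (P.comp (X + C a)).leadingCoeff := by
      rw [leadingCoeff, hdeg, heq]
    rw [h1, leadingCoeff_comp (by rw [natDegree_X_add_C]; omega),
      (monic_X_add_C a).leadingCoeff, one_pow, mul_one, leadingCoeff, ← heq, sub_self]

lemma S_sub (w : R) (z : ℕ) (P Q : Polynomial R) (n : ℕ) :
    ∑ m ∈ range (n+1), C (w^m * (P - Q).eval (m:R)) * X^(z*m) * qbinom R n m =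
      (∑ m ∈ range (n+1), C (w^m * P.eval (m:R)) * X^(z*m) * qbinom R n m) -
        ∑ m ∈ range (n+1), C (w^m * Q.eval (m:R)) * X^(z*m) * qbinom R n m := by
  rw [← Finset.sum_sub_distrib]
  apply Finset.sum_congr rfl
  intro m _
  rw [eval_sub, mul_sub, map_sub]
  ring

lemma chain (hd : 0 < d) (hX : Φ ∣ X ^ d - 1)
    (hq : ∀ m, 0 < m → m < d → Φ ∣ qbinom R d m) (w : R) (hw : w ^ d = -1) (z : ℕ)
    (P : Polynomial R) (n' : ℕ) :
    Φ ∣ (∑ m ∈ range (n'+d+1), C (w^m * P.eval (m:R)) * X^(z*m) * qbinom R (n'+d) m) -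
      ((∑ m ∈ range (n'+1), C (w^m * P.eval (m:R)) * X^(z*m) * qbinom R n' m) -
        ∑ m ∈ range (n'+1),
          C (w^m * (P.comp (X + C (d:R))).eval (m:R)) * X^(z*m) * qbinom R n' m) := by
  have hzd : Φ ∣ (X : Polynomial R) ^ (z*d) - 1 := by
    have h1 : (X : Polynomial R) ^ d - 1 ∣ ((X : Polynomial R)^d) ^ z - 1 ^ z :=
      sub_dvd_pow_sub_pow _ _ z
    rw [one_pow, ← pow_mul, mul_comm d z] at h1
    exact hX.trans h1
  set cf : ℕ → Polynomial R := fun m => C (w^m * P.eval (m:R)) * X^(z*m) with hcf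
  -- Step A
  have stepA : Φ ∣ (∑ m ∈ range (n'+d+1), cf m * qbinom R (n'+d) m) -
      ∑ m ∈ range (n'+d+1),
        cf m * (qbinom R n' m + if d ≤ m then qbinom R n' (m-d) else 0) := by
    rw [← Finset.sum_sub_distrib]
    apply Finset.dvd_sum
    intro m _
    have hterm : cf m * qbinom R (n'+d) m -
        cf m * (qbinom R n' m + if d ≤ m then qbinom R n' (m-d) else 0) =
        cf m * (qbinom R (n'+d) m - qbinom R n' m -
          if d ≤ m then qbinom R n' (m-d) else 0) := by ring
    rw [hterm]
    apply Dvd.dvd.mul_left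
    rcases le_or_gt d m with hdm | hdm
    · rw [if_pos hdm]
      have h := (periodic_pascal hd hX hq n').2 (m-d)
      rwa [show m - d + d = m from by omega] at h
    · rw [if_neg (by omega), sub_zero]
      exact (periodic_pascal hd hX hq n').1 m hdm
  -- split
  have hsplit : ∑ m ∈ range (n'+d+1),
      cf m * (qbinom R n' m + if d ≤ m then qbinom R n' (m-d) else 0) =
      (∑ m ∈ range (n'+d+1), cf m * qbinom R n' m) +
        ∑ m ∈ range (n'+d+1), cf m * (if d ≤ m then qbinom R n' (m-d) else 0) := by
    rw [← Finset.sum_add_distrib]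
    exact Finset.sum_congr rfl fun m _ => by ring
  -- Step B
  have stepB : ∑ m ∈ range (n'+d+1), cf m * qbinom R n' m =
      ∑ m ∈ range (n'+1), cf m * qbinom R n' m := by
    symm
    apply Finset.sum_subset (Finset.range_subset_range.2 (by omega))
    intro m _ hm
    rw [Finset.mem_range, not_lt] at hm
    rw [qbinom_eq_zero_of_lt (by omega : n' < m), mul_zero]
  -- Step C
  have stepC : ∑ m ∈ range (n'+d+1), cf m * (if d ≤ m then qbinom R n' (m-d) else 0) =
      ∑ i ∈ range (n'+1), cf (d+i) * qbinom R n' i := by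
    have e1 : ∑ m ∈ range (n'+d+1), cf m * (if d ≤ m then qbinom R n' (m-d) else 0) =
        ∑ m ∈ Finset.Ico d (n'+d+1), cf m * (if d ≤ m then qbinom R n' (m-d) else 0) := by
      symm
      apply Finset.sum_subset
      · rw [Finset.range_eq_Ico]
        exact Finset.Ico_subset_Ico (by omega) le_rfl
      · intro m _ hm
        rw [Finset.mem_Ico] at hm
        rw [Finset.mem_range] at *
        rcases le_or_gt d m with h | h
        · exfalso; exact hm ⟨h, by omega⟩
        · rw [if_neg (by omega), mul_zero]
    rw [e1]
    have e2 : ∑ m ∈ Finset.Ico d (n'+d+1), cf m * (if d ≤ m then qbinom R n' (m-d) else 0) =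
        ∑ m ∈ Finset.Ico d (n'+d+1), cf m * qbinom R n' (m-d) := by
      apply Finset.sum_congr rfl
      intro m hm
      rw [Finset.mem_Ico] at hm
      rw [if_pos hm.1]
    rw [e2, Finset.sum_Ico_eq_sum_range, show n'+d+1-d = n'+1 from by omega]
    apply Finset.sum_congr rfl
    intro i _
    rw [show d+i-d = i from by omega]
  -- Step D
  have stepD : Φ ∣ (∑ i ∈ range (n'+1), cf (d+i) * qbinom R n' i) +
      ∑ m ∈ range (n'+1),
        C (w^m * (P.comp (X + C (d:R))).eval (m:R)) * X^(z*m) * qbinom R n' m := by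
    rw [← Finset.sum_add_distrib]
    apply Finset.dvd_sum
    intro i _
    have hev : (P.comp (X + C (d:R))).eval (i:R) = P.eval ((d:R) + i) := by
      rw [eval_comp, eval_add, eval_X, eval_C, add_comm]
    have hterm : cf (d+i) * qbinom R n' i +
        C (w^i * (P.comp (X + C (d:R))).eval (i:R)) * X^(z*i) * qbinom R n' i =
        (-(C (w^i * P.eval ((d:R) + i)) * X^(z*i) * qbinom R n' i)) *
          ((X:Polynomial R)^(z*d) - 1) := by
      rw [hcf, hev]
      simp only [Nat.cast_add, pow_add, hw, Nat.mul_add, map_mul, map_neg, map_one]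
      ring
    rw [hterm]
    exact hzd.mul_left _
  have key := dvd_add stepA stepD
  have : (∑ m ∈ range (n'+d+1), cf m * qbinom R (n'+d) m) -
      ∑ m ∈ range (n'+d+1),
        cf m * (qbinom R n' m + if d ≤ m then qbinom R n' (m-d) else 0) +
      ((∑ i ∈ range (n'+1), cf (d+i) * qbinom R n' i) +
        ∑ m ∈ range (n'+1),
          C (w^m * (P.comp (X + C (d:R))).eval (m:R)) * X^(z*m) * qbinom R n' m) =
      (∑ m ∈ range (n'+d+1), cf m * qbinom R (n'+d) m) -
        ((∑ m ∈ range (n'+1), cf m * qbinom R n' m) -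
          ∑ m ∈ range (n'+1),
            C (w^m * (P.comp (X + C (d:R))).eval (m:R)) * X^(z*m) * qbinom R n' m) := by
    rw [hsplit, stepB, stepC]
    ring
  rwa [this] at key

lemma main_sum [IsDomain R] (hd : 0 < d) (hX : Φ ∣ X ^ d - 1)
    (hq : ∀ m, 0 < m → m < d → Φ ∣ qbinom R d m) (w : R) (hw : w ^ d = -1) (z : ℕ) :
    ∀ D (P : Polynomial R), P.natDegree ≤ D → ∀ n, (D+1)*d ≤ n →
      Φ ∣ ∑ m ∈ range (n+1), C (w^m * P.eval (m:R)) * X^(z*m) * qbinom R n m := by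
  intro D
  induction D with
  | zero =>
    intro P hP n hn
    rw [zero_add, one_mul] at hn
    have h := chain hd hX hq w hw z P (n - d)
    rw [show n - d + d = n from by omega] at h
    have hQ : P.comp (X + C (d:R)) = P := by
      conv_lhs => rw [eq_C_of_natDegree_le_zero hP]
      rw [C_comp, ← eq_C_of_natDegree_le_zero hP]
    rw [hQ, sub_self, sub_zero] at h
    exact h
  | succ D ih =>
    intro P hP n hn
    have hdn : d ≤ n := by
      have h1 : 1 * d ≤ (D+1+1) * d := Nat.mul_le_mul_right d (by omega)
      omega
    have h := chain hd hX hq w hw z P (n - d)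
    rw [show n - d + d = n from by omega] at h
    have hPQ := ih (P - P.comp (X + C (d:R)))
      (natDegree_sub_comp_le P _ D hP) (n - d)
      (by
        have h1 : (D+1) * d + d = (D+1+1) * d := by ring
        omega)
    rw [S_sub] at hPQ
    have hfin := dvd_add h hPQ
    rwa [sub_add_cancel] at hfin

end QBLemmas

lemma cyclotomic_dvd_qbinom_complex (d m : ℕ) (h0 : 0 < m) (hm : m < d) :
    cyclotomic d ℂ ∣ qbinom ℂ d m := by
  have hd : 0 < d := h0.trans hm
  obtain ⟨μ₀, hμ₀⟩ : ∃ μ : ℂ, IsPrimitiveRoot μ d :=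
    ⟨Complex.exp (2 * Real.pi * Complex.I / d), Complex.isPrimitiveRoot_exp d hd.ne'⟩
  rw [cyclotomic_eq_prod_X_sub_primitiveRoots hμ₀]
  apply Finset.prod_dvd_of_coprime
  · intro a ha b hb hab
    exact Polynomial.pairwise_coprime_X_sub_C Function.injective_id hab
  · intro μ hμ
    rw [mem_primitiveRoots hd] at hμ
    rw [dvd_iff_isRoot, IsRoot]
    have key := congrArg (eval μ) (qbinom_mul_prod ℂ d m hm.le)
    simp only [eval_mul, eval_prod, eval_sub, eval_one, eval_pow, eval_X] at key
    have hnum : (∏ i ∈ Finset.Ico (d - m) d, (1 - μ ^ (i+1))) = 0 := by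
      apply Finset.prod_eq_zero (i := d - 1)
      · rw [Finset.mem_Ico]; omega
      · have : d - 1 + 1 = d := by omega
        rw [this, hμ.pow_eq_one, sub_self]
    have hden : (∏ i ∈ range m, (1 - μ ^ (i+1))) ≠ 0 := by
      rw [Finset.prod_ne_zero_iff]
      intro i hi
      rw [Finset.mem_range] at hi
      intro h
      have h1 : μ ^ (i+1) = 1 := by linear_combination -h
      have hdvd := hμ.dvd_of_pow_eq_one _ h1
      have := Nat.le_of_dvd (by omega) hdvd
      omega
    rw [hnum] at key
    exact (mul_eq_zero.1 key).resolve_right hden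

theorem first_order_vanishing_general (c k : ℕ) (hc : 1 ≤ c) (hk : Odd k) (hk0 : 0 < k)
    (ζ : ℂ) (hζ : IsPrimitiveRoot ζ (2 * c)) (z : ℕ) (P : Polynomial (Zadj ζ)) (n : ℕ)
    (hn : (P.natDegree + 1) * (k * c) ≤ n) :
    Polynomial.cyclotomic (k * c) (Zadj ζ) ∣
      ∑ m ∈ Finset.range (n + 1), C (zeta ζ ^ m * P.eval (m : Zadj ζ)) * X ^ (z * m) *
        qbinom (Zadj ζ) n m := by
  have hd : 0 < k * c := Nat.mul_pos hk0 hc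
  have hX : cyclotomic (k*c) (Zadj ζ) ∣ X ^ (k*c) - 1 :=
    cyclotomic.dvd_X_pow_sub_one (k*c) (Zadj ζ)
  have hq : ∀ m, 0 < m → m < k*c → cyclotomic (k*c) (Zadj ζ) ∣ qbinom (Zadj ζ) (k*c) m := by
    intro m h0 hm
    have hinj : Function.Injective (algebraMap (Zadj ζ) ℂ) := Subtype.val_injective
    rw [← map_dvd_map (algebraMap (Zadj ζ) ℂ) hinj (cyclotomic.monic (k*c) (Zadj ζ)),
      map_cyclotomic, qbinom_map]
    exact cyclotomic_dvd_qbinom_complex (k*c) m h0 hm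
  have hwC : ζ ^ (k*c) = -1 := by
    have h2c : ζ ^ (2*c) = 1 := hζ.pow_eq_one
    have hc1 : ζ ^ c ≠ 1 := by
      intro h
      have hdvd := hζ.dvd_of_pow_eq_one c h
      have := Nat.le_of_dvd (by omega) hdvd
      omega
    have hsq : (ζ ^ c - 1) * (ζ ^ c + 1) = 0 := by
      have : (ζ ^ c) ^ 2 = 1 := by rw [← pow_mul, mul_comm]; exact h2c
      linear_combination this
    have hζc : ζ ^ c = -1 := by
      rcases mul_eq_zero.1 hsq with h | h
      · exact absurd (by linear_combination h) hc1
      · linear_combination h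
    obtain ⟨t, ht⟩ := hk
    rw [ht, show (2*t+1)*c = (2*c)*t + c from by ring, pow_add, pow_mul, h2c, one_pow,
      one_mul, hζc]
  have hw : (zeta ζ) ^ (k*c) = -1 := by
    apply Subtype.ext
    push_cast [zeta]
    exact hwC
  exact main_sum hd hX hq (zeta ζ) hw z P.natDegree P le_rfl n hn
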